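/- Let f, f₀ : ℤ^d → ℂ be finitely supported with supp f ⊂ D ∩ ℤ^d, supp f₀ ⊂ D₀ ∩ ℤ^d for bounded convex sets D, D₀ ⊂ ℝ^d with dist(D, D₀) > 0, and suppose f₀ ≢ 0. Then the data |𝓕(f+f₀)(p)|² and |𝓕f(p)|² for all p ∈ T^d, together with knowledge of f₀, uniquely determine f. In other words, if f₁, f₂ both satisfy the support condition and |𝓕(f₁+f₀)| = |𝓕(f₂+f₀)| and |𝓕f₁| = |𝓕f₂| on T^d, then f₁ = f₂. -/

import Mathlib

open MeasureTheory Complex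

/-- Dot product `k · x` between `k ∈ ℝ^d` and a lattice point `x ∈ ℤ^d`. -/
def dotIR {d : ℕ} (k : Fin d → ℝ) (x : Fin d → ℤ) : ℝ := ∑ i, k i * (x i : ℝ)

/-- Discrete Fourier transform `𝓕u(k) = (2π)^{-d/2} ∑_{x ∈ ℤ^d} u(x) e^{-ik·x}`. -/
noncomputable def dft {d : ℕ} (u : (Fin d → ℤ) → ℂ) (k : Fin d → ℝ) : ℂ :=
  ((2 * Real.pi) ^ (-(d : ℝ) / 2) : ℝ) *
    ∑' x : Fin d → ℤ, u x * Complex.exp (-Complex.I * (dotIR k x : ℝ))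

/-- Inverse discrete Fourier transform
`𝓕⁻¹w(x) = (2π)^{-d/2} ∫_{T^d} w(k) e^{ik·x} dk`, with `T^d` realized as `[-π,π]^d`. -/
noncomputable def invDft {d : ℕ} (w : (Fin d → ℝ) → ℂ) (x : Fin d → ℤ) : ℂ :=
  ((2 * Real.pi) ^ (-(d : ℝ) / 2) : ℝ) *
    ∫ k in Set.univ.pi (fun _ : Fin d => Set.Icc (-Real.pi) Real.pi),
      w k * Complex.exp (Complex.I * (dotIR k x : ℝ))


/-- The natural embedding of `ℤ^d` into Euclidean space `ℝ^d`. -/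
def toE {d : ℕ} (x : Fin d → ℤ) : EuclideanSpace ℝ (Fin d) := WithLp.toLp 2 (fun i => (x i : ℝ))

section Aux

open Function

lemma pu_oneDim (n : ℤ) :
    ∫ t in Set.Icc (-Real.pi) Real.pi, Complex.exp (Complex.I * t * n) =
      ((if n = 0 then (2 * Real.pi : ℝ) else 0 : ℝ) : ℂ) := by
  have hle : (-Real.pi) ≤ Real.pi := by linarith [Real.pi_pos]
  rw [MeasureTheory.integral_Icc_eq_integral_Ioc, ← intervalIntegral.integral_of_le hle]
  by_cases hn : n = 0
  · subst hn
    simp only [Int.cast_zero, mul_zero, Complex.exp_zero, if_pos]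
    rw [intervalIntegral.integral_const]
    push_cast
    rw [real_smul]
    push_cast
    ring
  · simp only [if_neg hn]
    have hc : (Complex.I * n) ≠ 0 := by
      simp [Complex.I_ne_zero, Int.cast_ne_zero, hn]
    simp_rw [show ∀ t : ℝ, Complex.I * t * n = (Complex.I * n) * t from fun t => by ring]
    rw [integral_exp_mul_complex hc]
    have : Complex.I * n * ↑Real.pi = Complex.I * n * (↑(-Real.pi) : ℝ) + n * (2 * Real.pi * Complex.I) := by
      push_cast; ring
    rw [this, Complex.exp_add, Complex.exp_int_mul_two_pi_mul_I, mul_one, sub_self, zero_div]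
    simp

lemma pu_boxIntegral {d : ℕ} (m : Fin d → ℤ) :
    ∫ k in Set.univ.pi (fun _ : Fin d => Set.Icc (-Real.pi) Real.pi),
      Complex.exp (Complex.I * (dotIR k m : ℝ)) =
    if m = 0 then (((2 * Real.pi) ^ d : ℝ) : ℂ) else 0 := by
  have hbox : MeasurableSet (Set.univ.pi (fun _ : Fin d => Set.Icc (-Real.pi) Real.pi)) :=
    MeasurableSet.univ_pi fun _ => measurableSet_Icc
  have hsplit : ∀ k : Fin d → ℝ,
      Complex.exp (Complex.I * (dotIR k m : ℝ)) =
        ∏ i, Complex.exp (Complex.I * (k i) * (m i)) := by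
    intro k
    rw [← Complex.exp_sum]
    congr 1
    unfold dotIR
    push_cast
    rw [Finset.mul_sum]
    congr 1; ext i; ring
  calc ∫ k in Set.univ.pi (fun _ : Fin d => Set.Icc (-Real.pi) Real.pi),
        Complex.exp (Complex.I * (dotIR k m : ℝ))
      = ∫ k : Fin d → ℝ, ∏ i,
          (Set.Icc (-Real.pi) Real.pi).indicator
            (fun t : ℝ => Complex.exp (Complex.I * t * (m i))) (k i) := by
        rw [← integral_indicator hbox]
        congr 1; ext k
        by_cases hk : k ∈ Set.univ.pi (fun _ : Fin d => Set.Icc (-Real.pi) Real.pi)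
        · rw [Set.indicator_of_mem hk, hsplit]
          apply Finset.prod_congr rfl
          intro i _
          rw [Set.indicator_of_mem (hk i (Set.mem_univ i))]
        · rw [Set.indicator_of_notMem hk]
          rw [Set.mem_pi] at hk
          push_neg at hk
          obtain ⟨i, _, hi⟩ := hk
          exact (Finset.prod_eq_zero (Finset.mem_univ i)
            (by rw [Set.indicator_of_notMem hi])).symm
    _ = ∏ i, ∫ t : ℝ, (Set.Icc (-Real.pi) Real.pi).indicator
            (fun t : ℝ => Complex.exp (Complex.I * t * (m i))) t :=
        MeasureTheory.integral_fintype_prod_eq_prod _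
    _ = ∏ i, ((if m i = 0 then (2 * Real.pi : ℝ) else 0 : ℝ) : ℂ) := by
        apply Finset.prod_congr rfl
        intro i _
        rw [integral_indicator measurableSet_Icc, pu_oneDim]
    _ = if m = 0 then (((2 * Real.pi) ^ d : ℝ) : ℂ) else 0 := by
        by_cases hm : m = 0
        · subst hm
          simp [Finset.prod_const]
        · rw [if_neg hm]
          have : ∃ i, m i ≠ 0 := by
            by_contra hc; push_neg at hc; exact hm (funext hc)
          obtain ⟨i, hi⟩ := this
          exact Finset.prod_eq_zero (Finset.mem_univ i) (by simp [hi])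

lemma pu_dotIR_sub {d : ℕ} (k : Fin d → ℝ) (a b : Fin d → ℤ) :
    dotIR k (a - b) = dotIR k a - dotIR k b := by
  unfold dotIR
  rw [← Finset.sum_sub_distrib]
  apply Finset.sum_congr rfl
  intro i _
  push_cast [Pi.sub_apply]
  ring

lemma pu_dotIR_cont {d : ℕ} (x : Fin d → ℤ) :
    Continuous (fun k : Fin d → ℝ => dotIR k x) := by
  unfold dotIR
  exact continuous_finset_sum _ fun i _ => (continuous_apply i).mul continuous_const

noncomputable def puE {d : ℕ} (k : Fin d → ℝ) (x : Fin d → ℤ) : ℂ :=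
  Complex.exp (-Complex.I * (dotIR k x : ℝ))

lemma puE_mul {d : ℕ} (k : Fin d → ℝ) (x y : Fin d → ℤ) :
    puE k x * Complex.exp (Complex.I * (dotIR k y : ℝ)) = puE k (x - y) := by
  unfold puE
  rw [← Complex.exp_add, pu_dotIR_sub]
  push_cast
  ring_nf

lemma puE_conj {d : ℕ} (k : Fin d → ℝ) (y : Fin d → ℤ) :
    (starRingEnd ℂ) (puE k y) = Complex.exp (Complex.I * (dotIR k y : ℝ)) := by
  unfold puE
  rw [← Complex.exp_conj, map_mul, map_neg, Complex.conj_I, Complex.conj_ofReal]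
  ring_nf

lemma puE_conj' {d : ℕ} (k : Fin d → ℝ) (x y : Fin d → ℤ) :
    (starRingEnd ℂ) (puE k (x - y)) = puE k (y - x) := by
  rw [puE_conj]
  unfold puE
  congr 1
  rw [pu_dotIR_sub, pu_dotIR_sub]
  push_cast
  ring

lemma pu_toE_sub {d : ℕ} (a b : Fin d → ℤ) : toE (a - b) = toE a - toE b := by
  ext i
  simp [toE]

lemma pu_extract {d : ℕ} {ι : Type} (P : Finset ι) (c : ι → ℂ) (v : ι → Fin d → ℤ)
    (h : ∀ k : Fin d → ℝ, ∑ p ∈ P, c p * puE k (v p) = 0)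
    (z : Fin d → ℤ) : ∑ p ∈ P.filter (fun p => v p = z), c p = 0 := by
  unfold puE at h
  set B := Set.univ.pi (fun _ : Fin d => Set.Icc (-Real.pi) Real.pi) with hB
  have hcompact : IsCompact B := isCompact_univ_pi fun _ => isCompact_Icc
  have key : ∀ k : Fin d → ℝ,
      ∑ p ∈ P, c p * Complex.exp (Complex.I * (dotIR k (z - v p) : ℝ)) = 0 := by
    intro k
    have := h k
    calc ∑ p ∈ P, c p * Complex.exp (Complex.I * (dotIR k (z - v p) : ℝ))
        = (∑ p ∈ P, c p * Complex.exp (-Complex.I * (dotIR k (v p) : ℝ))) *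
            Complex.exp (Complex.I * (dotIR k z : ℝ)) := by
          rw [Finset.sum_mul]
          apply Finset.sum_congr rfl
          intro p _
          rw [mul_assoc, ← Complex.exp_add, pu_dotIR_sub]
          push_cast
          ring_nf
      _ = 0 := by rw [this, zero_mul]
  have hint : ∀ p : ι, IntegrableOn
      (fun k : Fin d → ℝ => c p * Complex.exp (Complex.I * (dotIR k (z - v p) : ℝ))) B := by
    intro p
    apply ContinuousOn.integrableOn_compact hcompact
    apply Continuous.continuousOn
    exact continuous_const.mul (Complex.continuous_exp.comp
      (continuous_const.mul (Complex.continuous_ofReal.comp (pu_dotIR_cont _))))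
  have h0 : (0 : ℂ) = ∑ p ∈ P, c p *
      (if v p = z then (((2 * Real.pi) ^ d : ℝ) : ℂ) else 0) := by
    calc (0 : ℂ) = ∫ k in B, (0 : ℂ) := by simp
      _ = ∫ k in B, ∑ p ∈ P, c p * Complex.exp (Complex.I * (dotIR k (z - v p) : ℝ)) := by
          congr 1; ext k; rw [key k]
      _ = ∑ p ∈ P, ∫ k in B, c p * Complex.exp (Complex.I * (dotIR k (z - v p) : ℝ)) :=
          integral_finset_sum _ fun p _ => hint p
      _ = ∑ p ∈ P, c p * (if v p = z then (((2 * Real.pi) ^ d : ℝ) : ℂ) else 0) := by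
          apply Finset.sum_congr rfl
          intro p _
          rw [integral_const_mul, pu_boxIntegral]
          by_cases hvp : v p = z
          · simp [hvp]
          · rw [if_neg (fun hc => hvp (sub_eq_zero.mp hc).symm), if_neg hvp]
  have h2 : (0 : ℂ) = (((2 * Real.pi) ^ d : ℝ) : ℂ) *
      ∑ p ∈ P.filter (fun p => v p = z), c p := by
    rw [h0, Finset.mul_sum, Finset.sum_filter]
    apply Finset.sum_congr rfl
    intro p _
    by_cases hvp : v p = z <;> simp [hvp, mul_comm]
  have hne : (((2 * Real.pi) ^ d : ℝ) : ℂ) ≠ 0 := by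
    simp only [ne_eq, Complex.ofReal_eq_zero]
    positivity
  exact (mul_eq_zero.mp h2.symm).resolve_left hne

lemma pu_conv_witness {d : ℕ} (g h : (Fin d → ℤ) → ℂ) (hg : (support g).Finite)
    (hh : (support h).Finite) (hgne : g ≠ 0) (hhne : h ≠ 0) :
    ∃ z, ∑ x ∈ hg.toFinset, g x * h (z - x) ≠ 0 := by
  letI : WellFoundedLT (Fin d) := inferInstance
  letI : IsOrderedAddMonoid (Lex (Fin d → ℤ)) := inferInstance
  have hgn : (hg.toFinset.image (toLex : (Fin d → ℤ) → Lex (Fin d → ℤ))).Nonempty := by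
    obtain ⟨x, hx⟩ := Function.ne_iff.mp hgne
    exact ⟨toLex x, Finset.mem_image_of_mem _ (hg.mem_toFinset.mpr hx)⟩
  have hhn : (hh.toFinset.image (toLex : (Fin d → ℤ) → Lex (Fin d → ℤ))).Nonempty := by
    obtain ⟨x, hx⟩ := Function.ne_iff.mp hhne
    exact ⟨toLex x, Finset.mem_image_of_mem _ (hh.mem_toFinset.mpr hx)⟩
  set x₀L := (hg.toFinset.image (toLex : (Fin d → ℤ) → Lex (Fin d → ℤ))).max' hgn with hx₀L
  set w₀L := (hh.toFinset.image (toLex : (Fin d → ℤ) → Lex (Fin d → ℤ))).max' hhn with hw₀L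
  set x₀ : Fin d → ℤ := ofLex x₀L
  set w₀ : Fin d → ℤ := ofLex w₀L
  have hx₀mem : x₀ ∈ hg.toFinset := by
    obtain ⟨a, ha, hae⟩ := Finset.mem_image.mp
      ((hg.toFinset.image (toLex : (Fin d → ℤ) → Lex (Fin d → ℤ))).max'_mem hgn)
    have : x₀ = a := by rw [show x₀ = ofLex x₀L from rfl, hx₀L, ← hae]; rfl
    rwa [this]
  have hw₀mem : w₀ ∈ hh.toFinset := by
    obtain ⟨a, ha, hae⟩ := Finset.mem_image.mp
      ((hh.toFinset.image (toLex : (Fin d → ℤ) → Lex (Fin d → ℤ))).max'_mem hhn)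
    have : w₀ = a := by rw [show w₀ = ofLex w₀L from rfl, hw₀L, ← hae]; rfl
    rwa [this]
  refine ⟨x₀ + w₀, ?_⟩
  have hsum : ∑ x ∈ hg.toFinset, g x * h (x₀ + w₀ - x) = g x₀ * h w₀ := by
    rw [Finset.sum_eq_single_of_mem x₀ hx₀mem]
    · rw [add_sub_cancel_left]
    · intro x hx hxne
      by_contra hterm
      have hgx : g x ≠ 0 := fun hc => hterm (by rw [hc, zero_mul])
      have hhx : h (x₀ + w₀ - x) ≠ 0 := fun hc => hterm (by rw [hc, mul_zero])
      have hle1 : toLex x ≤ x₀L :=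
        Finset.le_max' _ _ (Finset.mem_image_of_mem _ hx)
      have hle2 : toLex (x₀ + w₀ - x) ≤ w₀L :=
        Finset.le_max' _ _ (Finset.mem_image_of_mem _ (hh.mem_toFinset.mpr hhx))
      have heq : toLex (x₀ + w₀ - x) = x₀L + w₀L - toLex x := rfl
      rw [heq] at hle2
      have : x₀L ≤ toLex x := by
        calc x₀L = x₀L + w₀L - w₀L := by ring
          _ ≤ w₀L + toLex x - w₀L := by
              exact sub_le_sub_right (by rwa [sub_le_iff_le_add] at hle2) _
          _ = toLex x := by ring
      exact hxne (toLex.injective (le_antisymm hle1 this))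
  rw [hsum]
  exact mul_ne_zero (by simpa using hg.mem_toFinset.mp hx₀mem)
    (by simpa using hh.mem_toFinset.mp hw₀mem)

lemma pu_dft_eq {d : ℕ} (u : (Fin d → ℤ) → ℂ) (s : Finset (Fin d → ℤ))
    (hu : ∀ x, x ∉ s → u x = 0) (k : Fin d → ℝ) :
    dft u k = ((2 * Real.pi) ^ (-(d : ℝ) / 2) : ℝ) *
      ∑ x ∈ s, u x * puE k x := by
  unfold dft puE
  congr 1
  exact tsum_eq_sum (fun b hb => by rw [hu b hb, zero_mul])

end Aux

/-- Phaseless uniqueness with background source: if `supp f₁, supp f₂ ⊂ D ∩ ℤ^d`,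
`supp f₀ ⊂ D₀ ∩ ℤ^d`, `f₀ ≢ 0`, `D, D₀` convex bounded with `dist(D, D₀) > 0`, and
`|𝓕(f₁+f₀)| = |𝓕(f₂+f₀)|`, `|𝓕f₁| = |𝓕f₂|` on the torus, then `f₁ = f₂`. -/
theorem phaseless_uniqueness {d : ℕ} (D D₀ : Set (EuclideanSpace ℝ (Fin d)))
    (hDb : Bornology.IsBounded D) (hD₀b : Bornology.IsBounded D₀)
    (hDc : Convex ℝ D) (hD₀c : Convex ℝ D₀)
    (f₀ : (Fin d → ℤ) → ℂ) (hf₀s : (Function.support f₀).Finite)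
    (hf₀D : ∀ x, f₀ x ≠ 0 → toE x ∈ D₀) (hf₀ne : f₀ ≠ 0)
    (hsep : ∃ δ : ℝ, 0 < δ ∧ ∀ a ∈ D, ∀ b ∈ D₀, δ ≤ dist a b)
    (f₁ f₂ : (Fin d → ℤ) → ℂ)
    (hf₁s : (Function.support f₁).Finite) (hf₂s : (Function.support f₂).Finite)
    (hf₁D : ∀ x, f₁ x ≠ 0 → toE x ∈ D) (hf₂D : ∀ x, f₂ x ≠ 0 → toE x ∈ D)
    (h1 : ∀ p : Fin d → ℝ, ‖dft (f₁ + f₀) p‖ = ‖dft (f₂ + f₀) p‖)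
    (h2 : ∀ p : Fin d → ℝ, ‖dft f₁ p‖ = ‖dft f₂ p‖) :
    f₁ = f₂ := by
  classical
  by_contra hne
  set C : ℝ := ((2 * Real.pi) ^ (-(d : ℝ) / 2) : ℝ) with hCdef
  have hCpos : 0 < C := by rw [hCdef]; positivity
  set g : (Fin d → ℤ) → ℂ := f₁ - f₂ with hgdef
  have hgne : g ≠ 0 := sub_ne_zero.mpr hne
  have hgs : (Function.support g).Finite :=
    Set.Finite.subset (hf₁s.union hf₂s) (Function.support_sub f₁ f₂)
  set s : Finset (Fin d → ℤ) := (hf₁s.union (hf₂s.union hf₀s)).toFinset with hsdef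
  have hmem : ∀ x : Fin d → ℤ, x ∈ s ↔ (f₁ x ≠ 0 ∨ f₂ x ≠ 0 ∨ f₀ x ≠ 0) := by
    intro x
    rw [hsdef, Set.Finite.mem_toFinset]
    simp [Function.mem_support]
  have hs1 : ∀ x, x ∉ s → f₁ x = 0 := fun x hx => by
    by_contra hc; exact hx ((hmem x).mpr (Or.inl hc))
  have hs2 : ∀ x, x ∉ s → f₂ x = 0 := fun x hx => by
    by_contra hc; exact hx ((hmem x).mpr (Or.inr (Or.inl hc)))
  have hs0 : ∀ x, x ∉ s → f₀ x = 0 := fun x hx => by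
    by_contra hc; exact hx ((hmem x).mpr (Or.inr (Or.inr hc)))
  have hs10 : ∀ x, x ∉ s → (f₁ + f₀) x = 0 := fun x hx => by
    rw [Pi.add_apply, hs1 x hx, hs0 x hx, add_zero]
  have hs20 : ∀ x, x ∉ s → (f₂ + f₀) x = 0 := fun x hx => by
    rw [Pi.add_apply, hs2 x hx, hs0 x hx, add_zero]
  have hdadd1 : ∀ k, dft (f₁ + f₀) k = dft f₁ k + dft f₀ k := by
    intro k
    rw [pu_dft_eq (f₁ + f₀) s hs10 k, pu_dft_eq f₁ s hs1 k, pu_dft_eq f₀ s hs0 k,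
      ← mul_add, ← Finset.sum_add_distrib]
    congr 1
    apply Finset.sum_congr rfl
    intro x _
    rw [Pi.add_apply, add_mul]
  have hdadd2 : ∀ k, dft (f₂ + f₀) k = dft f₂ k + dft f₀ k := by
    intro k
    rw [pu_dft_eq (f₂ + f₀) s hs20 k, pu_dft_eq f₂ s hs2 k, pu_dft_eq f₀ s hs0 k,
      ← mul_add, ← Finset.sum_add_distrib]
    congr 1
    apply Finset.sum_congr rfl
    intro x _
    rw [Pi.add_apply, add_mul]
  have hre : ∀ k, ((dft f₁ k - dft f₂ k) * (starRingEnd ℂ) (dft f₀ k)).re = 0 := by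
    intro k
    have q1 : Complex.normSq (dft f₁ k + dft f₀ k) = Complex.normSq (dft f₂ k + dft f₀ k) := by
      rw [← Complex.sq_norm, ← Complex.sq_norm, ← hdadd1 k, ← hdadd2 k, h1 k]
    have q2 : Complex.normSq (dft f₁ k) = Complex.normSq (dft f₂ k) := by
      rw [← Complex.sq_norm, ← Complex.sq_norm, h2 k]
    rw [Complex.normSq_add, Complex.normSq_add] at q1
    have q3 : (dft f₁ k * (starRingEnd ℂ) (dft f₀ k)).re
        = (dft f₂ k * (starRingEnd ℂ) (dft f₀ k)).re := by linarith
    rw [sub_mul, Complex.sub_re, q3, sub_self]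
  have hd12 : ∀ k, dft f₁ k - dft f₂ k = C * ∑ x ∈ s, g x * puE k x := by
    intro k
    rw [pu_dft_eq f₁ s hs1 k, pu_dft_eq f₂ s hs2 k, ← mul_sub, ← Finset.sum_sub_distrib]
    congr 1
    apply Finset.sum_congr rfl
    intro x _
    rw [hgdef, Pi.sub_apply, sub_mul]
  have hd0c : ∀ k, (starRingEnd ℂ) (dft f₀ k)
      = C * ∑ y ∈ s, (starRingEnd ℂ) (f₀ y) * Complex.exp (Complex.I * (dotIR k y : ℝ)) := by
    intro k
    rw [pu_dft_eq f₀ s hs0 k, map_mul, Complex.conj_ofReal, map_sum]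
    congr 1
    apply Finset.sum_congr rfl
    intro y _
    rw [map_mul, puE_conj]
  have hprod : ∀ k, (dft f₁ k - dft f₂ k) * (starRingEnd ℂ) (dft f₀ k)
      = ((C ^ 2 : ℝ) : ℂ) *
          ∑ p ∈ s ×ˢ s, (g p.1 * (starRingEnd ℂ) (f₀ p.2)) * puE k (p.1 - p.2) := by
    intro k
    rw [hd12 k, hd0c k, mul_mul_mul_comm, Finset.sum_mul_sum, Finset.sum_product]
    push_cast
    rw [sq]
    congr 1
    apply Finset.sum_congr rfl
    intro x _
    apply Finset.sum_congr rfl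
    intro y _
    show (g x * puE k x) * ((starRingEnd ℂ) (f₀ y) * Complex.exp (Complex.I * (dotIR k y : ℝ)))
        = (g x * (starRingEnd ℂ) (f₀ y)) * puE k (x - y)
    rw [← puE_mul k x y]
    ring
  have hQ0 : ∀ k,
      (∑ p ∈ s ×ˢ s, (g p.1 * (starRingEnd ℂ) (f₀ p.2)) * puE k (p.1 - p.2))
      + (∑ p ∈ s ×ˢ s, ((starRingEnd ℂ) (g p.1) * f₀ p.2) * puE k (p.2 - p.1)) = 0 := by
    intro k
    have hre2 : (∑ p ∈ s ×ˢ s,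
        (g p.1 * (starRingEnd ℂ) (f₀ p.2)) * puE k (p.1 - p.2)).re = 0 := by
      have h' : (C ^ 2) * (∑ p ∈ s ×ˢ s,
          (g p.1 * (starRingEnd ℂ) (f₀ p.2)) * puE k (p.1 - p.2)).re = 0 := by
        rw [← Complex.re_ofReal_mul, ← hprod k]
        exact hre k
      exact (mul_eq_zero.mp h').resolve_left (pow_ne_zero _ (ne_of_gt hCpos))
    have hconj : (starRingEnd ℂ) (∑ p ∈ s ×ˢ s,
          (g p.1 * (starRingEnd ℂ) (f₀ p.2)) * puE k (p.1 - p.2))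
        = ∑ p ∈ s ×ˢ s, ((starRingEnd ℂ) (g p.1) * f₀ p.2) * puE k (p.2 - p.1) := by
      rw [map_sum]
      apply Finset.sum_congr rfl
      intro p _
      rw [map_mul, map_mul, Complex.conj_conj, puE_conj']
    rw [← hconj, Complex.add_conj, hre2]
    simp
  have hext : ∀ z : Fin d → ℤ,
      (∑ p ∈ (s ×ˢ s).filter (fun p => p.1 - p.2 = z), g p.1 * (starRingEnd ℂ) (f₀ p.2))
      + (∑ p ∈ (s ×ˢ s).filter (fun p => p.2 - p.1 = z),
          (starRingEnd ℂ) (g p.1) * f₀ p.2) = 0 := by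
    intro z
    have h0 := pu_extract ((s ×ˢ s).disjSum (s ×ˢ s))
      (Sum.elim (fun p => g p.1 * (starRingEnd ℂ) (f₀ p.2))
        (fun p => (starRingEnd ℂ) (g p.1) * f₀ p.2))
      (Sum.elim (fun p => p.1 - p.2) (fun p => p.2 - p.1))
      (fun k => by
        rw [Finset.sum_disjSum]
        simpa using hQ0 k) z
    rw [Finset.sum_filter, Finset.sum_disjSum] at h0
    simp only [Sum.elim_inl, Sum.elim_inr] at h0
    rw [Finset.sum_filter, Finset.sum_filter]
    exact h0
  have hgD : ∀ x, g x ≠ 0 → toE x ∈ D := by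
    intro x hx
    by_cases h1x : f₁ x ≠ 0
    · exact hf₁D x h1x
    · push_neg at h1x
      apply hf₂D x
      intro h2x
      exact hx (by rw [hgdef, Pi.sub_apply, h1x, h2x, sub_zero])
  have hgeo : ∀ (x y x' y' : Fin d → ℤ), g x ≠ 0 → f₀ y ≠ 0 → g x' ≠ 0 → f₀ y' ≠ 0 →
      x - y = y' - x' → False := by
    intro x y x' y' hgx hfy hgx' hfy' hxy
    obtain ⟨δ, hδpos, hδ⟩ := hsep
    have ha : toE x ∈ D := hgD x hgx
    have ha' : toE x' ∈ D := hgD x' hgx'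
    have hb : toE y ∈ D₀ := hf₀D y hfy
    have hb' : toE y' ∈ D₀ := hf₀D y' hfy'
    have hEe : toE x - toE y = toE y' - toE x' := by
      rw [← pu_toE_sub, ← pu_toE_sub, hxy]
    have hmD : ((1:ℝ)/2) • toE x + ((1:ℝ)/2) • toE x' ∈ D :=
      hDc ha ha' (by norm_num) (by norm_num) (by norm_num)
    have hmD₀ : ((1:ℝ)/2) • toE y' + ((1:ℝ)/2) • toE y ∈ D₀ :=
      hD₀c hb' hb (by norm_num) (by norm_num) (by norm_num)
    have heqm : ((1:ℝ)/2) • toE x + ((1:ℝ)/2) • toE x'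
        = ((1:ℝ)/2) • toE y' + ((1:ℝ)/2) • toE y := by
      have h4 : toE x + toE x' = toE y' + toE y := sub_eq_sub_iff_add_eq_add.mp hEe
      rw [← smul_add, ← smul_add, h4]
    have hcontra := hδ _ hmD _ hmD₀
    rw [heqm, dist_self] at hcontra
    linarith
  have hA0 : ∀ z, ∑ p ∈ (s ×ˢ s).filter (fun p => p.1 - p.2 = z),
      g p.1 * (starRingEnd ℂ) (f₀ p.2) = 0 := by
    intro z
    by_cases hall : ∀ p ∈ (s ×ˢ s).filter (fun p => p.1 - p.2 = z),
        g p.1 * (starRingEnd ℂ) (f₀ p.2) = 0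
    · exact Finset.sum_eq_zero hall
    · push_neg at hall
      obtain ⟨p, hpmem, hpne⟩ := hall
      have hz1 : p.1 - p.2 = z := (Finset.mem_filter.mp hpmem).2
      have hgp : g p.1 ≠ 0 := fun hc => hpne (by rw [hc, zero_mul])
      have hfp : f₀ p.2 ≠ 0 := fun hc => hpne (by rw [hc, map_zero, mul_zero])
      have hB0 : ∑ q ∈ (s ×ˢ s).filter (fun q => q.2 - q.1 = z),
          (starRingEnd ℂ) (g q.1) * f₀ q.2 = 0 := by
        apply Finset.sum_eq_zero
        intro q hq
        by_contra hqne
        have hz2 : q.2 - q.1 = z := (Finset.mem_filter.mp hq).2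
        have hgq : g q.1 ≠ 0 := fun hc => hqne (by rw [hc, map_zero, zero_mul])
        have hfq : f₀ q.2 ≠ 0 := fun hc => hqne (by rw [hc, mul_zero])
        exact hgeo p.1 p.2 q.1 q.2 hgp hfp hgq hfq (by rw [hz1, ← hz2])
      have hAB := hext z
      rw [hB0, add_zero] at hAB
      exact hAB
  have hsub : hgs.toFinset ⊆ s := by
    intro x hx
    have hgx : g x ≠ 0 := hgs.mem_toFinset.mp hx
    by_cases h1x : f₁ x ≠ 0
    · exact (hmem x).mpr (Or.inl h1x)
    · push_neg at h1x
      refine (hmem x).mpr (Or.inr (Or.inl ?_))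
      intro h2x
      exact hgx (by rw [hgdef, Pi.sub_apply, h1x, h2x, sub_zero])
  have hconv : ∀ z, ∑ x ∈ hgs.toFinset,
      g x * (fun w => (starRingEnd ℂ) (f₀ (-w))) (z - x) = 0 := by
    intro z
    have e3 : ∑ x ∈ hgs.toFinset, g x * (starRingEnd ℂ) (f₀ (-(z - x)))
        = ∑ x ∈ s, g x * (starRingEnd ℂ) (f₀ (-(z - x))) :=
      Finset.sum_subset hsub (fun x _ hx => by
        rw [show g x = 0 from by_contra fun hc => hx (hgs.mem_toFinset.mpr hc), zero_mul])
    show ∑ x ∈ hgs.toFinset, g x * (starRingEnd ℂ) (f₀ (-(z - x))) = 0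
    rw [e3]
    have e1 : ∑ p ∈ (s ×ˢ s).filter (fun p => p.1 - p.2 = z),
        g p.1 * (starRingEnd ℂ) (f₀ p.2)
        = ∑ x ∈ s, g x * (starRingEnd ℂ) (f₀ (x - z)) := by
      rw [Finset.sum_filter, Finset.sum_product]
      apply Finset.sum_congr rfl
      intro x _
      have hiff : ∀ y : Fin d → ℤ, (x - y = z) = (y = x - z) := by
        intro y
        apply propext
        constructor
        · intro h; rw [← h]; exact (sub_sub_cancel x y).symm
        · intro h; rw [h]; exact sub_sub_cancel x z
      simp_rw [hiff]
      rw [Finset.sum_ite_eq' s (x - z) (fun y => g x * (starRingEnd ℂ) (f₀ y))]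
      by_cases hmem' : x - z ∈ s
      · rw [if_pos hmem']
      · rw [if_neg hmem', hs0 _ hmem', map_zero, mul_zero]
    calc ∑ x ∈ s, g x * (starRingEnd ℂ) (f₀ (-(z - x)))
        = ∑ x ∈ s, g x * (starRingEnd ℂ) (f₀ (x - z)) := by
          apply Finset.sum_congr rfl
          intro x _
          rw [neg_sub]
      _ = 0 := by rw [← e1]; exact hA0 z
  have hhs : (Function.support fun w => (starRingEnd ℂ) (f₀ (-w))).Finite := by
    apply Set.Finite.subset (hf₀s.image (fun y => -y))
    intro w hw
    rw [Function.mem_support] at hw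
    have : f₀ (-w) ≠ 0 := fun hc => hw (by rw [hc, map_zero])
    exact ⟨-w, this, neg_neg w⟩
  have hhne : (fun w => (starRingEnd ℂ) (f₀ (-w))) ≠ 0 := by
    obtain ⟨y, hy⟩ := Function.ne_iff.mp hf₀ne
    intro hc
    have hcy := congrFun hc (-y)
    simp at hcy
    exact hy hcy
  obtain ⟨z, hz⟩ := pu_conv_witness g (fun w => (starRingEnd ℂ) (f₀ (-w))) hgs hhs hgne hhne
  exact hz (hconv z)
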